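/- Let D be a symmetric max-plus idempotent matrix in M_n(ℝ). The following are equivalent: (i) D has tropical rank n; (ii) D has a 0 in every diagonal position and nowhere else; (iii) D has a 0 in every diagonal position and all off-diagonal entries negative. -/

import Mathlib

open scoped BigOperators

/-- Max-plus matrix product over ℝ. -/
noncomputable def tmul {n : ℕ} (A B : Fin n → Fin n → ℝ) : Fin n → Fin n → ℝ :=
  fun i j => ⨆ k, A i k + B k j

/-- Max-plus idempotency. -/
def IsTropIdem {n : ℕ} (A : Fin n → Fin n → ℝ) : Prop := tmul A A = A

/-- Tropical permanent. -/
noncomputable def tperm {n : ℕ} (A : Fin n → Fin n → ℝ) : ℝ :=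
  ⨆ σ : Equiv.Perm (Fin n), ∑ i, A i (σ i)

/-- The tropical permanent is attained by a unique permutation. -/
def UniqPerm {n : ℕ} (A : Fin n → Fin n → ℝ) : Prop :=
  ∃! σ : Equiv.Perm (Fin n), ∑ i, A i (σ i) = tperm A

/-- Tropical rank: the largest size of a square minor whose tropical
permanent is attained by a unique permutation. -/
noncomputable def tropRank {n : ℕ} (A : Fin n → Fin n → ℝ) : ℕ :=
  sSup {k : ℕ | ∃ r c : Fin k ↪ Fin n, UniqPerm (fun i j => A (r i) (c j))}

/-- Column space: all max-plus linear combinations of the columns. -/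
def colSpace {n : ℕ} (A : Fin n → Fin n → ℝ) : Set (Fin n → ℝ) :=
  {x | ∃ lam : Fin n → ℝ, ∀ i, x i = ⨆ j, lam j + A i j}

/-- Residuation distance δ(x,y) = max_k (x_k - y_k). -/
noncomputable def tdelta {n : ℕ} (x y : Fin n → ℝ) : ℝ := ⨆ k, (x k - y k)

/-- Residuation operator ⟨x∣y⟩ = min_k (y_k - x_k). -/
noncomputable def tresid {n : ℕ} (x y : Fin n → ℝ) : ℝ := ⨅ k, (y k - x k)

/-- Tropical Hilbert projective metric. -/
noncomputable def tHilbert {n : ℕ} (x y : Fin n → ℝ) : ℝ :=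
  (tdelta x y + tdelta y x) / 2

lemma le_myciSup {ι : Type*} [Finite ι] (f : ι → ℝ) (i : ι) : f i ≤ ⨆ j, f j :=
  le_ciSup (Set.Finite.bddAbove (Set.finite_range f)) i

lemma exists_eq_myciSup {ι : Type*} [Finite ι] [Nonempty ι] (f : ι → ℝ) :
    ∃ i, f i = ⨆ j, f j := by
  obtain ⟨i, hi⟩ := Finite.exists_max f
  exact ⟨i, le_antisymm (le_myciSup f i) (ciSup_le hi)⟩

/-- transfer of UniqPerm under row/column permutations -/
lemma uniqPerm_comp {n : ℕ} (D : Fin n → Fin n → ℝ) (er ec : Equiv.Perm (Fin n))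
    (h : UniqPerm (fun i j => D (er i) (ec j))) : UniqPerm D := by
  haveI : Nonempty (Equiv.Perm (Fin n)) := ⟨1⟩
  set B : Fin n → Fin n → ℝ := fun i j => D (er i) (ec j) with hB
  set Φ : Equiv.Perm (Fin n) → Equiv.Perm (Fin n) :=
    fun σ => (er.symm.trans σ).trans ec with hΦ
  set Ψ : Equiv.Perm (Fin n) → Equiv.Perm (Fin n) :=
    fun π => (er.trans π).trans ec.symm with hΨ
  have key : ∀ σ : Equiv.Perm (Fin n), ∑ i, B i (σ i) = ∑ i, D i (Φ σ i) := by
    intro σ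
    rw [← Equiv.sum_comp er (fun m => D m (Φ σ m))]
    simp [hB, hΦ, Equiv.trans_apply]
  have hΦΨ : ∀ π, Φ (Ψ π) = π := by
    intro π; ext x; simp [hΦ, hΨ, Equiv.trans_apply]
  have htp : tperm B = tperm D := by
    apply le_antisymm
    · apply ciSup_le; intro σ; rw [key σ]; exact le_myciSup (fun π : Equiv.Perm (Fin n) => ∑ i, D i (π i)) (Φ σ)
    · apply ciSup_le; intro π
      have := key (Ψ π)
      rw [hΦΨ π] at this
      rw [← this]
      exact le_myciSup (fun σ => ∑ i, B i (σ i)) (Ψ π)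
  obtain ⟨σ₀, hσ₀, huniq⟩ := h
  refine ⟨Φ σ₀, ?_, ?_⟩
  · show ∑ i, D i (Φ σ₀ i) = tperm D
    rw [← key σ₀, hσ₀, htp]
  · intro π hπ
    replace hπ : ∑ i, D i (π i) = tperm D := hπ
    have h1 : ∑ i, B i (Ψ π i) = tperm B := by
      rw [key (Ψ π), hΦΨ π, hπ, htp]
    have h2 : Ψ π = σ₀ := huniq (Ψ π) h1
    rw [← hΦΨ π, h2]

theorem stmt13 (n : ℕ) (hn : 0 < n) (D : Fin n → Fin n → ℝ)
    (hidem : IsTropIdem D) (hsymm : ∀ i j, D i j = D j i) :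
    (tropRank D = n ↔
      ((∀ i, D i i = 0) ∧ ∀ i j, i ≠ j → D i j ≠ 0)) ∧
    (((∀ i, D i i = 0) ∧ ∀ i j, i ≠ j → D i j ≠ 0) ↔
      ((∀ i, D i i = 0) ∧ ∀ i j, i ≠ j → D i j < 0)) := by
  haveI : Nonempty (Fin n) := ⟨⟨0, hn⟩⟩
  haveI : Nonempty (Equiv.Perm (Fin n)) := ⟨1⟩
  -- basic consequences of idempotency
  have hidem' : ∀ i j, (⨆ k, D i k + D k j) = D i j := fun i j =>
    congrFun (congrFun hidem i) j
  have hle : ∀ i j k, D i k + D k j ≤ D i j := by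
    intro i j k
    rw [← hidem' i j]
    exact le_myciSup (fun k => D i k + D k j) k
  have hatt : ∀ i j, ∃ k, D i k + D k j = D i j := by
    intro i j
    obtain ⟨k, hk⟩ := exists_eq_myciSup (fun k => D i k + D k j)
    exact ⟨k, hk.trans (hidem' i j)⟩
  have h2 : ∀ i k, 2 * D i k ≤ D i i := by
    intro i k
    have h := hle i i k
    have hs := hsymm k i
    linarith
  have hdneg : ∀ i, D i i ≤ 0 := by
    intro i; have := h2 i i; linarith
  have hoffle : ∀ i j, 2 * D i j ≤ D i i + D j j := by
    intro i j
    obtain ⟨k, hk⟩ := hatt i j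
    have h1 := h2 i k
    have h3 := h2 j k
    have hs := hsymm k j
    linarith
  have hentry : ∀ i j, D i j ≤ 0 := by
    intro i j
    have := hoffle i j
    have := hdneg i
    have := hdneg j
    linarith
  -- identity maximizes
  have hsum_le : ∀ σ : Equiv.Perm (Fin n), ∑ i, D i (σ i) ≤ ∑ i, D i i := by
    intro σ
    have key : ∑ i, 2 * D i (σ i) ≤ ∑ i, (D i i + D (σ i) (σ i)) :=
      Finset.sum_le_sum (fun i _ => hoffle i (σ i))
    have e1 : ∑ i, (D i i + D (σ i) (σ i)) = ∑ i, D i i + ∑ i, D (σ i) (σ i) :=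
      Finset.sum_add_distrib
    have e2 : ∑ i, D (σ i) (σ i) = ∑ i, D i i := Equiv.sum_comp σ (fun i => D i i)
    have e3 : ∑ i, 2 * D i (σ i) = 2 * ∑ i, D i (σ i) := by
      rw [Finset.mul_sum]
    linarith
  have hidsum : ∑ i, D i ((1 : Equiv.Perm (Fin n)) i) = ∑ i, D i i := by simp
  have htperm : tperm D = ∑ i, D i i := by
    apply le_antisymm
    · exact ciSup_le hsum_le
    · rw [← hidsum]
      exact le_myciSup (fun σ : Equiv.Perm (Fin n) => ∑ i, D i (σ i)) 1
  -- swap sums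
  have hswap : ∀ i k : Fin n, i ≠ k →
      ∑ m, D m (Equiv.swap i k m) = ∑ m, D m m - D i i - D k k + D i k + D k i := by
    intro i k hik
    have hsub : ∑ m ∈ ({i, k} : Finset (Fin n)), (D m (Equiv.swap i k m) - D m m)
        = ∑ m, (D m (Equiv.swap i k m) - D m m) := by
      refine Finset.sum_subset (Finset.subset_univ _) ?_
      intro m _ hm
      simp only [Finset.mem_insert, Finset.mem_singleton, not_or] at hm
      rw [Equiv.swap_apply_of_ne_of_ne hm.1 hm.2]
      ring
    rw [Finset.sum_pair hik] at hsub
    have h0 := hsub.symm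
    rw [Equiv.swap_apply_left, Equiv.swap_apply_right] at h0
    have h1 : ∑ m, (D m (Equiv.swap i k m) - D m m)
        = ∑ m, D m (Equiv.swap i k m) - ∑ m, D m m := Finset.sum_sub_distrib _ _
    linarith
  -- second iff
  have part2 : ((∀ i, D i i = 0) ∧ ∀ i j, i ≠ j → D i j ≠ 0) ↔
      ((∀ i, D i i = 0) ∧ ∀ i j, i ≠ j → D i j < 0) := by
    constructor
    · rintro ⟨hd, hne⟩
      exact ⟨hd, fun i j hij => lt_of_le_of_ne (hentry i j) (hne i j hij)⟩
    · rintro ⟨hd, hlt⟩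
      exact ⟨hd, fun i j hij => ne_of_lt (hlt i j hij)⟩
  refine ⟨?_, part2⟩
  constructor
  · -- rank n → zero diag, nonzero off-diag
    intro hrank
    set S : Set ℕ := {k : ℕ | ∃ r c : Fin k ↪ Fin n,
      UniqPerm (fun i j => D (r i) (c j))} with hS
    have h0S : 0 ∈ S := by
      refine ⟨⟨Fin.elim0, fun x => x.elim0⟩, ⟨Fin.elim0, fun x => x.elim0⟩, 1, ?_, ?_⟩
      · haveI : Nonempty (Equiv.Perm (Fin 0)) := ⟨1⟩
        show (∑ i : Fin 0, _) = tperm _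
        rw [tperm]
        simp
      · intro σ _
        exact Equiv.ext (fun x => x.elim0)
    have hbdd : ∀ k ∈ S, k ≤ n := by
      rintro k ⟨r, c, _⟩
      simpa using Fintype.card_le_of_embedding r
    have hnS : n ∈ S := by
      have := Nat.sSup_mem ⟨0, h0S⟩ ⟨n, hbdd⟩
      rwa [show sSup S = n from hrank] at this
    obtain ⟨r, c, hU⟩ := hnS
    have hrbij : Function.Bijective r :=
      (Fintype.bijective_iff_injective_and_card r).mpr ⟨r.injective, rfl⟩
    have hcbij : Function.Bijective c :=
      (Fintype.bijective_iff_injective_and_card c).mpr ⟨c.injective, rfl⟩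
    have hUD : UniqPerm D :=
      uniqPerm_comp D (Equiv.ofBijective r hrbij) (Equiv.ofBijective c hcbij) hU
    obtain ⟨σ₀, hσ₀, huniq⟩ := hUD
    have hid : (1 : Equiv.Perm (Fin n)) = σ₀ := by
      apply huniq
      rw [htperm]; simpa using hidsum
    have huniq' : ∀ σ : Equiv.Perm (Fin n), ∑ i, D i (σ i) = ∑ i, D i i → σ = 1 := by
      intro σ hσ
      rw [← hid] at huniq
      exact huniq σ (by rw [htperm]; exact hσ)
    have hdiag : ∀ i, D i i = 0 := by
      intro i
      by_contra hne
      have hii : D i i < 0 := lt_of_le_of_ne (hdneg i) hne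
      obtain ⟨k, hk⟩ := hatt i i
      have hk2 : 2 * D i k = D i i := by have := hsymm k i; linarith
      have hki : k ≠ i := by
        rintro rfl; linarith
      have hsw := hswap i k (Ne.symm hki)
      have hsum : ∑ m, D m (Equiv.swap i k m) = ∑ m, D m m - D k k := by
        have := hsymm k i; linarith
      have hkk := hdneg k
      rcases lt_or_eq_of_le hkk with hlt | heq
      · have := hsum_le (Equiv.swap i k); linarith
      · have hσ1 : Equiv.swap i k = 1 := by
          apply huniq'
          rw [hsum, heq]; ring
        have : Equiv.swap i k i = i := by rw [hσ1]; rfl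
        rw [Equiv.swap_apply_left] at this
        exact hki this
    refine ⟨hdiag, ?_⟩
    intro i j hij hDij
    have hii0 : D i i = 0 := hdiag i
    have hjj0 : D j j = 0 := hdiag j
    have hsw := hswap i j hij
    have hσ1 : Equiv.swap i j = 1 := by
      apply huniq'
      rw [hsw, hii0, hjj0, hDij, hsymm j i, hDij]; ring
    have : Equiv.swap i j i = i := by rw [hσ1]; rfl
    rw [Equiv.swap_apply_left] at this
    exact hij this.symm
  · -- zero diag, nonzero off-diag → rank n
    rintro ⟨hdiag, hne⟩
    have hlt : ∀ i j, i ≠ j → D i j < 0 := fun i j hij =>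
      lt_of_le_of_ne (hentry i j) (hne i j hij)
    have hsum0 : ∑ i, D i i = 0 := Finset.sum_eq_zero (fun i _ => hdiag i)
    have hUD : UniqPerm D := by
      refine ⟨1, ?_, ?_⟩
      · rw [htperm]; simpa using hidsum
      · intro σ hσ
        rw [htperm, hsum0] at hσ
        have hterm : ∀ m ∈ Finset.univ, D m (σ m) ≤ 0 := by
          intro m _; exact hentry m (σ m)
        have hall := (Finset.sum_eq_zero_iff_of_nonpos hterm).mp hσ
        ext x
        by_contra hx
        have : D x (σ x) < 0 := hlt x (σ x) (fun h => hx (h ▸ rfl))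
        have := hall x (Finset.mem_univ x)
        linarith
    apply le_antisymm
    · apply csSup_le'
      rintro k ⟨r, c, _⟩
      simpa using Fintype.card_le_of_embedding r
    · apply le_csSup
      · exact ⟨n, by rintro k ⟨r, c, _⟩; simpa using Fintype.card_le_of_embedding r⟩
      · exact ⟨Function.Embedding.refl _, Function.Embedding.refl _, hUD⟩
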